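/- arXiv:2102.11644 — 2 statements merged into one kernel-verified Lean document; each statement's English description precedes it below -/
import Mathlib

section
/- For every nonzero real c and every natural number α, the weighted shifted Gaussian moment tends to zero for large averaging windows: lim_{T → ∞} e^{-c²T²/2} · R_α(T,c) = 0. -/
open MeasureTheory Filter Topology

open Real in
lemma aux_pow_int (n : ℕ) : Integrable (fun u : ℝ => |u| ^ n * Real.exp (-u ^ 2 / 2)) := by
  have h := (integrable_rpow_mul_exp_neg_mul_sq (b := 1/2) (by norm_num)
        (s := (n : ℝ)) (by exact_mod_cast lt_of_lt_of_le neg_one_lt_zero (Nat.cast_nonneg n))).abs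
  refine h.congr (Eventually.of_forall fun x => ?_)
  simp only [Real.rpow_natCast, abs_mul, abs_pow, abs_of_pos (Real.exp_pos _)]
  congr 1
  ring_nf

lemma aux_K_int (α : ℕ) : Integrable (fun u : ℝ => Real.exp (-u ^ 2 / 2) * (|u| + 1) ^ α) := by
  have : (fun u : ℝ => Real.exp (-u ^ 2 / 2) * (|u| + 1) ^ α)
      = fun u => ∑ k ∈ Finset.range (α + 1),
          (α.choose k : ℝ) * (|u| ^ k * Real.exp (-u ^ 2 / 2)) := by
    funext u
    rw [add_pow, Finset.mul_sum]
    refine Finset.sum_congr rfl fun k _ => by ring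
  rw [this]
  exact integrable_finset_sum _ fun k _ => (aux_pow_int k).const_mul _

/-- Shifted Gaussian moment `R_α(T,c) = (2πT²)^{-1/2} ∫ e^{-s²/(2T²)} (s + icT²)^α ds`. -/
noncomputable def shiftedMoment (T c : ℝ) (α : ℕ) : ℂ :=
  ((Real.sqrt (2 * Real.pi * T ^ 2) : ℝ) : ℂ)⁻¹ *
    ∫ s : ℝ, Complex.exp (-(s : ℂ) ^ 2 / (2 * (T : ℂ) ^ 2)) *
      ((s : ℂ) + Complex.I * c * T ^ 2) ^ α

theorem weighted_shiftedMoment_tendsto_zero (c : ℝ) (hc : c ≠ 0) (α : ℕ) :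
    Tendsto (fun T : ℝ =>
        Complex.exp (-((c : ℂ) ^ 2 * (T : ℂ) ^ 2) / 2) * shiftedMoment T c α)
      atTop (𝓝 0) := by
  have hc2 : 0 < c ^ 2 / 2 := by positivity
  set a := |c| with ha
  have ha0 : 0 ≤ a := abs_nonneg c
  set K := ∫ u : ℝ, Real.exp (-u ^ 2 / 2) * (|u| + 1) ^ α with hKdef
  have hK0 : 0 ≤ K := integral_nonneg fun u => by positivity
  set C : ℝ := (Real.sqrt (2 * Real.pi))⁻¹ * ((1 + a) ^ α * K) * 2 ^ α with hCdef
  apply squeeze_zero_norm'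
    (a := fun T : ℝ => C * ((T ^ 2) ^ α * Real.exp (-(c ^ 2 / 2 * T ^ 2))))
  · -- the eventual bound
    filter_upwards [eventually_ge_atTop 1] with T hT1
    have hT0 : (0:ℝ) < T := lt_of_lt_of_le one_pos hT1
    set F : ℝ → ℂ := fun s => Complex.exp (-(s : ℂ) ^ 2 / (2 * (T : ℂ) ^ 2)) *
      ((s : ℂ) + Complex.I * c * T ^ 2) ^ α with hF
    -- change of variables
    have hcv : (∫ x : ℝ, F (T * x)) = |T⁻¹| • ∫ y : ℝ, F y :=
      Measure.integral_comp_mul_left F T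
    have hnorm : ‖∫ s : ℝ, F s‖ = T * ‖∫ u : ℝ, F (T * u)‖ := by
      rw [hcv, norm_smul, Real.norm_eq_abs, abs_abs, abs_inv, abs_of_pos hT0]
      field_simp
    -- pointwise bound
    have hpt : ∀ u : ℝ, ‖F (T * u)‖ ≤
        (T ^ α * ((1 + a) ^ α * (1 + T) ^ α)) * (Real.exp (-u ^ 2 / 2) * (|u| + 1) ^ α) := by
      intro u
      have he : Complex.exp (-(↑(T * u) : ℂ) ^ 2 / (2 * (T : ℂ) ^ 2))
          = ((Real.exp (-u ^ 2 / 2) : ℝ) : ℂ) := by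
        rw [Complex.ofReal_exp]
        congr 1
        rw [show (-u ^ 2 / 2 : ℝ) = -(T * u) ^ 2 / (2 * T ^ 2) from by
          field_simp]
        push_cast
        ring
      have hz : ‖(↑(T * u) : ℂ) + Complex.I * c * T ^ 2‖
          ≤ T * ((|u| + 1) * ((1 + a) * (1 + T))) := by
        refine (norm_add_le _ _).trans ?_
        have h1 : ‖(↑(T * u) : ℂ)‖ = T * |u| := by
          rw [Complex.norm_real, Real.norm_eq_abs, abs_mul, abs_of_pos hT0]
        have h2 : ‖Complex.I * (c : ℂ) * (T : ℂ) ^ 2‖ = a * T ^ 2 := by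
          simp [norm_mul, Complex.norm_I, ha, sq_abs]
        rw [h1, h2]
        nlinarith [abs_nonneg u, mul_nonneg ha0 (abs_nonneg u),
          mul_nonneg (mul_nonneg ha0 (abs_nonneg u)) hT0.le,
          mul_nonneg (abs_nonneg u) hT0.le, mul_nonneg ha0 hT0.le, hT0.le]
      calc ‖F (T * u)‖
          = Real.exp (-u ^ 2 / 2) * ‖(↑(T * u) : ℂ) + Complex.I * c * T ^ 2‖ ^ α := by
            rw [hF]
            simp only [norm_mul, norm_pow, he, Complex.norm_real, Real.norm_eq_abs,
              abs_of_pos (Real.exp_pos _)]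
        _ ≤ Real.exp (-u ^ 2 / 2) * (T * ((|u| + 1) * ((1 + a) * (1 + T)))) ^ α :=
            mul_le_mul_of_nonneg_left (pow_le_pow_left₀ (norm_nonneg _) hz α)
              (Real.exp_pos _).le
        _ = (T ^ α * ((1 + a) ^ α * (1 + T) ^ α)) * (Real.exp (-u ^ 2 / 2) * (|u| + 1) ^ α) := by
            rw [mul_pow, mul_pow, mul_pow]
            ring
    -- integral bound
    have hib : ‖∫ u : ℝ, F (T * u)‖ ≤ (T ^ α * ((1 + a) ^ α * (1 + T) ^ α)) * K := by
      calc ‖∫ u : ℝ, F (T * u)‖ ≤ ∫ u : ℝ, ‖F (T * u)‖ := norm_integral_le_integral_norm _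
        _ ≤ ∫ u : ℝ, (T ^ α * ((1 + a) ^ α * (1 + T) ^ α)) *
              (Real.exp (-u ^ 2 / 2) * (|u| + 1) ^ α) :=
            integral_mono_of_nonneg (Eventually.of_forall fun u => norm_nonneg _)
              ((aux_K_int α).const_mul _) (Eventually.of_forall hpt)
        _ = (T ^ α * ((1 + a) ^ α * (1 + T) ^ α)) * K := by
            rw [integral_const_mul]
    -- assemble
    have hexp : Complex.exp (-((c : ℂ) ^ 2 * (T : ℂ) ^ 2) / 2)
        = ((Real.exp (-(c ^ 2 * T ^ 2) / 2) : ℝ) : ℂ) := by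
      rw [Complex.ofReal_exp]; congr 1; push_cast; ring
    have hsq : Real.sqrt (2 * Real.pi * T ^ 2) = Real.sqrt (2 * Real.pi) * T := by
      rw [Real.sqrt_mul (by positivity), Real.sqrt_sq hT0.le]
    have hmain : ‖Complex.exp (-((c : ℂ) ^ 2 * (T : ℂ) ^ 2) / 2) * shiftedMoment T c α‖
        = Real.exp (-(c ^ 2 * T ^ 2) / 2) *
          ((Real.sqrt (2 * Real.pi) * T)⁻¹ * ‖∫ s : ℝ, F s‖) := by
      rw [norm_mul, hexp, shiftedMoment, norm_mul, norm_inv, Complex.norm_real,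
        Complex.norm_real, Real.norm_eq_abs, Real.norm_eq_abs,
        abs_of_pos (Real.exp_pos _), hsq, abs_of_pos (by positivity), ← hF]
    rw [hmain, hnorm]
    have hTT : (Real.sqrt (2 * Real.pi) * T)⁻¹ * (T * ‖∫ u : ℝ, F (T * u)‖)
        ≤ (Real.sqrt (2 * Real.pi))⁻¹ * ‖∫ u : ℝ, F (T * u)‖ := by
      rw [mul_inv, mul_assoc, inv_mul_cancel_left₀ hT0.ne']
    have h1T : (1 + T) ^ α ≤ 2 ^ α * T ^ α := by
      rw [← mul_pow]
      gcongr
      linarith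
    have hexpeq : Real.exp (-(c ^ 2 * T ^ 2) / 2) = Real.exp (-(c ^ 2 / 2 * T ^ 2)) := by
      congr 1; ring
    have hpowT : (T ^ 2) ^ α = T ^ α * T ^ α := by
      rw [← pow_mul, ← pow_add, two_mul]
    rw [hexpeq, show C * ((T ^ 2) ^ α * Real.exp (-(c ^ 2 / 2 * T ^ 2)))
        = Real.exp (-(c ^ 2 / 2 * T ^ 2)) * (C * (T ^ 2) ^ α) from by ring]
    refine mul_le_mul_of_nonneg_left ?_ (Real.exp_pos _).le
    have step1 : (Real.sqrt (2 * Real.pi) * T)⁻¹ * (T * ‖∫ u : ℝ, F (T * u)‖)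
        ≤ (Real.sqrt (2 * Real.pi))⁻¹ * ((T ^ α * ((1 + a) ^ α * (1 + T) ^ α)) * K) :=
      hTT.trans (mul_le_mul_of_nonneg_left hib (by positivity))
    refine step1.trans ?_
    have step2 : T ^ α * ((1 + a) ^ α * (1 + T) ^ α) * K
        ≤ T ^ α * ((1 + a) ^ α * (2 ^ α * T ^ α)) * K := by
      have hx : (0:ℝ) ≤ T ^ α * (1 + a) ^ α := by positivity
      calc T ^ α * ((1 + a) ^ α * (1 + T) ^ α) * K
          = (T ^ α * (1 + a) ^ α * K) * (1 + T) ^ α := by ring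
        _ ≤ (T ^ α * (1 + a) ^ α * K) * (2 ^ α * T ^ α) :=
            mul_le_mul_of_nonneg_left h1T (by positivity)
        _ = T ^ α * ((1 + a) ^ α * (2 ^ α * T ^ α)) * K := by ring
    refine (mul_le_mul_of_nonneg_left step2 (by positivity)).trans_eq ?_
    rw [hCdef, hpowT]
    ring
  · -- tendsto of bound
    have h1 : Tendsto (fun x : ℝ => x ^ α * Real.exp (-x)) atTop (𝓝 0) :=
      Real.tendsto_pow_mul_exp_neg_atTop_nhds_zero α
    have h2 : Tendsto (fun T : ℝ => c ^ 2 / 2 * T ^ 2) atTop atTop :=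
      (tendsto_pow_atTop two_ne_zero).const_mul_atTop hc2
    have h3 := (h1.comp h2).const_mul (C * (2 / c ^ 2) ^ α)
    rw [mul_zero] at h3
    refine h3.congr fun T => ?_
    have hone : (2 / c ^ 2) ^ α * (c ^ 2 / 2) ^ α = 1 := by
      rw [← mul_pow]
      field_simp
      exact one_pow α
    simp only [Function.comp_apply]
    rw [mul_pow]
    linear_combination C * (T ^ 2) ^ α * Real.exp (-(c ^ 2 / 2 * T ^ 2)) * hone
end

section
/- For every nonzero real T, in the resonant case c = 0 the inverse mass matrix applied to consecutive triples of shifted Gaussian moments gives: M(T)^{-1}(R_0, R_1, R_2)ᵀ = (1, 0, 0)ᵀ, M(T)^{-1}(R_1, R_2, R_3)ᵀ = (0, 1, 0)ᵀ, M(T)^{-1}(R_2, R_3, R_4)ᵀ = (0, 0, 1)ᵀ, M(T)^{-1}(R_3, R_4, R_5)ᵀ = (0, 3T², 0)ᵀ, and M(T)^{-1}(R_4, R_5, R_6)ᵀ = (−3T⁴, 0, 6T²)ᵀ, where R_α = R_α(T,0). Consequently, in the limit T → ∞ the degree-2 phase-averaged system reduces to V̇₀ = Σ_m (F_{m,0,0}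 − 3T⁴ F_{m,2,2}), V̇₁ = Σ_m (2F_{m,0,1} + 6T² F_{m,1,2}), V̇₂ = Σ_m (F_{m,1,1} + 2F_{m,0,2} + 6T² F_{m,2,2}), the sum running over resonant terms only. -/
open Matrix MeasureTheory Real Filter

noncomputable def gaussMom (b : ℝ) (n : ℕ) : ℝ := ∫ x : ℝ, x ^ n * Real.exp (-b * x ^ 2)

lemma integrable_pow_mul_gauss {b : ℝ} (hb : 0 < b) (n : ℕ) :
    Integrable (fun x : ℝ => x ^ n * Real.exp (-b * x ^ 2)) := by
  have h := integrable_rpow_mul_exp_neg_mul_sq hb (s := (n : ℝ))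
    (lt_of_lt_of_le neg_one_lt_zero (Nat.cast_nonneg n))
  simpa [Real.rpow_natCast] using h

lemma gaussMom_odd {b : ℝ} {n : ℕ} (hn : Odd n) : gaussMom b n = 0 := by
  have h : gaussMom b n = -gaussMom b n := by
    unfold gaussMom
    nth_rewrite 1 [← MeasureTheory.integral_neg_eq_self]
    rw [← integral_neg]
    congr 1; funext x
    rw [hn.neg_pow]
    ring_nf
  linarith

lemma gaussMom_rec {b : ℝ} (hb : 0 < b) (n : ℕ) :
    gaussMom b (n + 2) = ((n + 1) / (2 * b)) * gaussMom b n := by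
  have hderiv : ∀ x : ℝ, HasDerivAt (fun x : ℝ => x ^ (n + 1) * Real.exp (-b * x ^ 2))
      (((n : ℝ) + 1) * x ^ n * Real.exp (-b * x ^ 2)
        - 2 * b * (x ^ (n + 2) * Real.exp (-b * x ^ 2))) x := by
    intro x
    have h1 : HasDerivAt (fun x : ℝ => x ^ (n + 1)) (((n : ℝ) + 1) * x ^ n) x := by
      simpa using hasDerivAt_pow (n + 1) x
    have h2 : HasDerivAt (fun x : ℝ => Real.exp (-b * x ^ 2))
        ((-b * (2 * x)) * Real.exp (-b * x ^ 2)) x := by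
      have : HasDerivAt (fun x : ℝ => -b * x ^ 2) (-b * (2 * x)) x := by
        simpa using ((hasDerivAt_pow 2 x).const_mul (-b))
      simpa [mul_comm] using this.exp
    refine (h1.mul h2).congr_deriv ?_
    ring
  have hint : ∀ m : ℕ, Integrable (fun x : ℝ => x ^ m * Real.exp (-b * x ^ 2)) :=
    integrable_pow_mul_gauss hb
  have hint1 : Integrable (fun x : ℝ => ((n : ℝ) + 1) * x ^ n * Real.exp (-b * x ^ 2)) := by
    simpa [mul_assoc] using (hint n).const_mul ((n : ℝ) + 1)
  have hint2 : Integrable (fun x : ℝ => 2 * b * (x ^ (n + 2) * Real.exp (-b * x ^ 2))) :=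
    (hint (n + 2)).const_mul (2 * b)
  have htend : ∀ l : Filter ℝ, l ≤ Filter.cocompact ℝ →
      Tendsto (fun x : ℝ => x ^ (n + 1) * Real.exp (-b * x ^ 2)) l (nhds 0) := by
    intro l hl
    have h2 : Tendsto (fun x : ℝ => |x| ^ ((n : ℝ) + 1) * Real.exp (-b * x ^ 2)) l (nhds 0) :=
      (tendsto_rpow_abs_mul_exp_neg_mul_sq_cocompact hb (n + 1)).mono_left hl
    rw [tendsto_zero_iff_norm_tendsto_zero]
    refine squeeze_zero (fun x => norm_nonneg _) (fun x => ?_) h2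
    rw [norm_mul, Real.norm_eq_abs, Real.norm_eq_abs, abs_pow,
      abs_of_pos (Real.exp_pos _),
      show ((n : ℝ) + 1) = ((n + 1 : ℕ) : ℝ) by push_cast; ring, Real.rpow_natCast]
  have key := integral_of_hasDerivAt_of_tendsto hderiv (hint1.sub hint2)
    (htend _ (by rw [cocompact_eq_atBot_atTop]; exact le_sup_left))
    (htend _ (by rw [cocompact_eq_atBot_atTop]; exact le_sup_right))
  rw [sub_zero, integral_sub hint1 hint2] at key
  have e1 : ∫ x : ℝ, ((n : ℝ) + 1) * x ^ n * Real.exp (-b * x ^ 2)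
      = ((n : ℝ) + 1) * gaussMom b n := by
    simp_rw [mul_assoc]; exact integral_const_mul _ _
  have e2 : ∫ x : ℝ, 2 * b * (x ^ (n + 2) * Real.exp (-b * x ^ 2))
      = 2 * b * gaussMom b (n + 2) := integral_const_mul _ _
  rw [e1, e2] at key
  rw [div_mul_eq_mul_div, eq_div_iff (by positivity : (2 : ℝ) * b ≠ 0)]
  linear_combination -key

lemma gaussMom_zero' {b : ℝ} : gaussMom b 0 = Real.sqrt (Real.pi / b) := by
  unfold gaussMom
  simpa using integral_gaussian b

/-- The degree-2 phase-averaging mass matrix with Gaussian weight. -/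
noncomputable def massMatrix (T : ℝ) : Matrix (Fin 3) (Fin 3) ℝ :=
  !![1, 0, T ^ 2; 0, T ^ 2, 0; T ^ 2, 0, 3 * T ^ 4]

/-- The mass matrix viewed as a complex matrix. -/
noncomputable def massMatrixC (T : ℝ) : Matrix (Fin 3) (Fin 3) ℂ :=
  (massMatrix T).map Complex.ofReal

lemma shiftedMoment_zero_eq (T : ℝ) (hT : T ≠ 0) (α : ℕ) :
    shiftedMoment T 0 α =
      (((Real.sqrt (2 * Real.pi * T ^ 2))⁻¹ * gaussMom ((2 * T ^ 2)⁻¹) α : ℝ) : ℂ) := by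
  unfold shiftedMoment gaussMom
  rw [Complex.ofReal_mul, Complex.ofReal_inv]
  congr 1
  have : ∀ s : ℝ, Complex.exp (-(s : ℂ) ^ 2 / (2 * (T : ℂ) ^ 2)) *
      ((s : ℂ) + Complex.I * (0 : ℝ) * (T : ℝ) ^ 2) ^ α
      = ((s ^ α * Real.exp (-(2 * T ^ 2)⁻¹ * s ^ 2) : ℝ) : ℂ) := by
    intro s
    have hT2 : ((T : ℂ)) ^ 2 ≠ 0 := pow_ne_zero _ (by exact_mod_cast hT)
    rw [show ((0 : ℝ) : ℂ) = 0 from Complex.ofReal_zero]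
    rw [Complex.ofReal_mul, Complex.ofReal_exp]
    push_cast
    rw [mul_comm]
    congr 2
    field_simp
    ring
    ring
  simp_rw [this]
  exact integral_ofReal

lemma sqrt2piT_pos (T : ℝ) (hT : T ≠ 0) : 0 < Real.sqrt (2 * Real.pi * T ^ 2) := by
  apply Real.sqrt_pos.2
  have := Real.pi_pos
  positivity

lemma gaussMom_T_zero (T : ℝ) (hT : T ≠ 0) :
    gaussMom ((2 * T ^ 2)⁻¹) 0 = Real.sqrt (2 * Real.pi * T ^ 2) := by
  rw [gaussMom_zero']
  congr 1
  rw [div_eq_mul_inv, inv_inv]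
  ring

lemma shiftedMoment0 (T : ℝ) (hT : T ≠ 0) : shiftedMoment T 0 0 = 1 := by
  rw [shiftedMoment_zero_eq T hT, gaussMom_T_zero T hT,
    inv_mul_cancel₀ (ne_of_gt (sqrt2piT_pos T hT)), Complex.ofReal_one]

lemma shiftedMoment_odd (T : ℝ) {α : ℕ} (hT : T ≠ 0) (hα : Odd α) :
    shiftedMoment T 0 α = 0 := by
  rw [shiftedMoment_zero_eq T hT, gaussMom_odd hα, mul_zero, Complex.ofReal_zero]

lemma hb_pos (T : ℝ) (hT : T ≠ 0) : 0 < (2 * T ^ 2)⁻¹ := by positivity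

lemma two_b (T : ℝ) (hT : T ≠ 0) : (2 * (2 * T ^ 2)⁻¹) = (T ^ 2)⁻¹ := by
  field_simp

lemma gaussMom2 (T : ℝ) (hT : T ≠ 0) :
    gaussMom ((2 * T ^ 2)⁻¹) 2 = T ^ 2 * Real.sqrt (2 * Real.pi * T ^ 2) := by
  have := gaussMom_rec (hb_pos T hT) 0
  rw [gaussMom_T_zero T hT, two_b T hT] at this
  rw [show (2 : ℕ) = 0 + 2 from rfl, this, div_eq_mul_inv, inv_inv]
  push_cast
  ring

lemma gaussMom4 (T : ℝ) (hT : T ≠ 0) :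
    gaussMom ((2 * T ^ 2)⁻¹) 4 = 3 * T ^ 4 * Real.sqrt (2 * Real.pi * T ^ 2) := by
  have := gaussMom_rec (hb_pos T hT) 2
  rw [gaussMom2 T hT, two_b T hT] at this
  rw [show (4 : ℕ) = 2 + 2 from rfl, this, div_eq_mul_inv, inv_inv]
  push_cast
  ring

lemma gaussMom6 (T : ℝ) (hT : T ≠ 0) :
    gaussMom ((2 * T ^ 2)⁻¹) 6 = 15 * T ^ 6 * Real.sqrt (2 * Real.pi * T ^ 2) := by
  have := gaussMom_rec (hb_pos T hT) 4
  rw [gaussMom4 T hT, two_b T hT] at this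
  rw [show (6 : ℕ) = 4 + 2 from rfl, this, div_eq_mul_inv, inv_inv]
  push_cast
  ring

lemma shiftedMoment2 (T : ℝ) (hT : T ≠ 0) : shiftedMoment T 0 2 = (T : ℂ) ^ 2 := by
  rw [shiftedMoment_zero_eq T hT, gaussMom2 T hT]
  rw [show (Real.sqrt (2 * Real.pi * T ^ 2))⁻¹ * (T ^ 2 * Real.sqrt (2 * Real.pi * T ^ 2))
      = T ^ 2 by
    field_simp]
  push_cast
  ring

lemma shiftedMoment4 (T : ℝ) (hT : T ≠ 0) : shiftedMoment T 0 4 = 3 * (T : ℂ) ^ 4 := by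
  rw [shiftedMoment_zero_eq T hT, gaussMom4 T hT]
  rw [show (Real.sqrt (2 * Real.pi * T ^ 2))⁻¹ * (3 * T ^ 4 * Real.sqrt (2 * Real.pi * T ^ 2))
      = 3 * T ^ 4 by
    field_simp]
  push_cast
  ring

lemma shiftedMoment6 (T : ℝ) (hT : T ≠ 0) : shiftedMoment T 0 6 = 15 * (T : ℂ) ^ 6 := by
  rw [shiftedMoment_zero_eq T hT, gaussMom6 T hT]
  rw [show (Real.sqrt (2 * Real.pi * T ^ 2))⁻¹ * (15 * T ^ 6 * Real.sqrt (2 * Real.pi * T ^ 2))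
      = 15 * T ^ 6 by
    field_simp]
  push_cast
  ring

theorem resonant_invMass_moment_identities (T : ℝ) (hT : T ≠ 0) :
    (massMatrixC T)⁻¹.mulVec
        ![shiftedMoment T 0 0, shiftedMoment T 0 1, shiftedMoment T 0 2] = ![1, 0, 0] ∧
    (massMatrixC T)⁻¹.mulVec
        ![shiftedMoment T 0 1, shiftedMoment T 0 2, shiftedMoment T 0 3] = ![0, 1, 0] ∧
    (massMatrixC T)⁻¹.mulVec
        ![shiftedMoment T 0 2, shiftedMoment T 0 3, shiftedMoment T 0 4] = ![0, 0, 1] ∧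
    (massMatrixC T)⁻¹.mulVec
        ![shiftedMoment T 0 3, shiftedMoment T 0 4, shiftedMoment T 0 5] =
      ![0, 3 * (T : ℂ) ^ 2, 0] ∧
    (massMatrixC T)⁻¹.mulVec
        ![shiftedMoment T 0 4, shiftedMoment T 0 5, shiftedMoment T 0 6] =
      ![-3 * (T : ℂ) ^ 4, 0, 6 * (T : ℂ) ^ 2] ∧
    -- Consequently, keeping only resonant terms (c = 0), the degree-2 phase-averaged
    -- system reduces to the stated equations.
    ∀ (ι : Type) [Fintype ι], ∀ F : ι → Fin 3 → Fin 3 → ℂ,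
      (∀ m k l, F m k l = F m l k) →
      (massMatrixC T)⁻¹.mulVec
          (fun j => ∑ m, ∑ k : Fin 3, ∑ l : Fin 3,
            F m k l * shiftedMoment T 0 ((j : ℕ) + (k : ℕ) + (l : ℕ))) =
        ![∑ m, (F m 0 0 - 3 * (T : ℂ) ^ 4 * F m 2 2),
          ∑ m, (2 * F m 0 1 + 6 * (T : ℂ) ^ 2 * F m 1 2),
          ∑ m, (F m 1 1 + 2 * F m 0 2 + 6 * (T : ℂ) ^ 2 * F m 2 2)] := by
  have hTC : (T : ℂ) ≠ 0 := by exact_mod_cast hT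
  have hdet : IsUnit (massMatrixC T).det := by
    have hd : (massMatrixC T).det = 2 * (T : ℂ) ^ 6 := by
      simp [massMatrixC, massMatrix, Matrix.det_fin_three]
      ring
    rw [hd]
    exact isUnit_iff_ne_zero.2 (by simp [hTC])
  have hkey : ∀ v w : Fin 3 → ℂ, (massMatrixC T).mulVec w = v →
      (massMatrixC T)⁻¹.mulVec v = w := by
    intro v w h
    rw [← h, Matrix.mulVec_mulVec, Matrix.nonsing_inv_mul _ hdet, Matrix.one_mulVec]
  have s0 := shiftedMoment0 T hT
  have s1 := shiftedMoment_odd T hT (by norm_num : Odd 1)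
  have s2 := shiftedMoment2 T hT
  have s3 := shiftedMoment_odd T hT (by decide : Odd 3)
  have s4 := shiftedMoment4 T hT
  have s5 := shiftedMoment_odd T hT (by decide : Odd 5)
  have s6 := shiftedMoment6 T hT
  refine ⟨hkey _ _ ?_, hkey _ _ ?_, hkey _ _ ?_, hkey _ _ ?_, hkey _ _ ?_, ?_⟩
  · funext i; fin_cases i <;>
      simp [massMatrixC, massMatrix, Matrix.mulVec, dotProduct,
        Fin.sum_univ_three, s0, s1, s2]
  · funext i; fin_cases i <;>
      simp [massMatrixC, massMatrix, Matrix.mulVec, dotProduct,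
        Fin.sum_univ_three, s1, s2, s3]
  · funext i; fin_cases i <;>
      simp [massMatrixC, massMatrix, Matrix.mulVec, dotProduct,
        Fin.sum_univ_three, s2, s3, s4] <;> ring
  · funext i; fin_cases i <;>
      simp [massMatrixC, massMatrix, Matrix.mulVec, dotProduct,
        Fin.sum_univ_three, s3, s4, s5] <;> ring
  · funext i; fin_cases i <;>
      simp [massMatrixC, massMatrix, Matrix.mulVec, dotProduct,
        Fin.sum_univ_three, s4, s5, s6] <;> ring
  · intro ι _ F hsym
    apply hkey
    funext i
    fin_cases i <;>
    · simp only [Fin.sum_univ_three, Fin.isValue, Fin.val_zero, Fin.val_one, Fin.val_two]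
      norm_num [massMatrixC, massMatrix, Matrix.mulVec, dotProduct,
        Fin.sum_univ_three, Matrix.cons_val, Matrix.cons_val_two, Matrix.tail_cons, Matrix.head_cons, s0, s1, s2, s3, s4, s5, s6, Finset.mul_sum,
        ← Finset.sum_add_distrib, ← Finset.sum_sub_distrib]
      refine Finset.sum_congr rfl fun m _ => ?_
      simp only [hsym m 2 0, hsym m 2 1, hsym m 1 0]
      ring
end
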